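/- Let (X,p) be a finite probability space and let u,w : X → (0,1). Then there exists a probability mass function q on X whose support has at most 5 elements such that E_q[u] = E_p[u], E_q[w] = E_p[w], E_q[H₂(u)] = E_p[H₂(u)], E_q[H₂(w)] = E_p[H₂(w)], and E_q[(u−w)(J(w)−J(u))] ≤ E_p[(u−w)(J(w)−J(u))]. -/

import Mathlib

/-- Binary entropy function. -/
noncomputable def H2 (x : ℝ) : ℝ := -x * Real.logb 2 x - (1 - x) * Real.logb 2 (1 - x)

/-- `J`, the derivative of the binary entropy function. -/
noncomputable def J (x : ℝ) : ℝ := Real.logb 2 ((1 - x) / x)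

private lemma reduce_support (X : Type) [Fintype X] (F : Fin 5 → X → ℝ)
    (hF0 : ∀ x, F 0 x = 1) (f : X → ℝ) :
    ∀ n : ℕ, ∀ q : X → ℝ, (∀ x, 0 ≤ q x) →
      (Finset.univ.filter (fun x => q x ≠ 0)).card ≤ n →
      ∃ q' : X → ℝ, (∀ x, 0 ≤ q' x) ∧
        (Finset.univ.filter (fun x => q' x ≠ 0)).card ≤ 5 ∧
        (∀ i, (∑ x, q' x * F i x) = ∑ x, q x * F i x) ∧
        (∑ x, q' x * f x) ≤ ∑ x, q x * f x := by
  classical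
  intro n
  induction n with
  | zero =>
      intro q hq hcard
      exact ⟨q, hq, le_trans hcard (by norm_num), fun i => rfl, le_refl _⟩
  | succ n ih =>
      intro q hq hcard
      set s : Finset X := Finset.univ.filter (fun x => q x ≠ 0) with hs
      by_cases h5 : s.card ≤ 5
      · exact ⟨q, hq, h5, fun i => rfl, le_refl _⟩
      push_neg at h5
      -- a nonzero direction killed by all five linear functionals
      have hqs : ∀ x : X, x ∉ s → q x = 0 := by
        intro x hx
        by_contra hne
        exact hx (Finset.mem_filter.mpr ⟨Finset.mem_univ x, hne⟩)
      -- linear map from (s → ℝ) to (Fin 5 → ℝ)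
      let L : (↥s → ℝ) →ₗ[ℝ] (Fin 5 → ℝ) :=
        { toFun := fun c i => ∑ x : ↥s, c x * F i (x : X)
          map_add' := by
            intro a b; funext i
            simp [add_mul, Finset.sum_add_distrib]
          map_smul' := by
            intro r a; funext i
            simp [Finset.mul_sum, mul_assoc] }
      have hnotinj : ¬ Function.Injective L := by
        intro hinj
        have h1 := LinearMap.finrank_le_finrank_of_injective hinj
        rw [Module.finrank_pi ℝ, Module.finrank_pi ℝ] at h1
        simp only [Fintype.card_coe, Fintype.card_fin] at h1
        omega
      rw [← LinearMap.ker_eq_bot] at hnotinj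
      obtain ⟨c, hcL, hc0⟩ := Submodule.ne_bot_iff _ |>.mp hnotinj
      have hcL' : ∀ i, (∑ x : ↥s, c x * F i (x : X)) = 0 := by
        intro i
        have := congrFun (LinearMap.mem_ker.mp hcL) i
        exact this
      -- promote to a function on X
      set d0 : X → ℝ := fun x => if h : x ∈ s then c ⟨x, h⟩ else 0 with hd0
      have hd0s : ∀ x : X, x ∉ s → d0 x = 0 := fun x hx => dif_neg hx
      have hd0sum : ∀ g : X → ℝ, (∑ x, d0 x * g x) = ∑ x : ↥s, c x * g (x : X) := by
        intro g
        rw [← Finset.sum_subset (Finset.subset_univ s)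
          (fun x _ hx => by rw [hd0s x hx, zero_mul]),
          ← Finset.sum_attach s (fun x => d0 x * g x)]
        apply Finset.sum_congr rfl
        intro x _
        simp [hd0, x.2]
      have hd0F : ∀ i, (∑ x, d0 x * F i x) = 0 := fun i => (hd0sum (F i)).trans (hcL' i)
      have hd0ne : ∃ x, d0 x ≠ 0 := by
        obtain ⟨y, hy⟩ := Function.ne_iff.mp hc0
        exact ⟨(y : X), by simpa [hd0, y.2] using hy⟩
      -- orient so the objective direction is nonpositive
      obtain ⟨d, hdF, hdf, hdne, hds⟩ :
          ∃ d : X → ℝ, (∀ i, (∑ x, d x * F i x) = 0) ∧ (∑ x, d x * f x) ≤ 0 ∧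
            (∃ x, d x ≠ 0) ∧ (∀ x, x ∉ s → d x = 0) := by
        rcases le_or_gt (∑ x, d0 x * f x) 0 with hle | hlt
        · exact ⟨d0, hd0F, hle, hd0ne, hd0s⟩
        · refine ⟨fun x => -d0 x, fun i => ?_, ?_, ?_, fun x hx => by simp [hd0s x hx]⟩
          · simp only [neg_mul]
            rw [Finset.sum_neg_distrib, hd0F i, neg_zero]
          · simp only [neg_mul]
            rw [Finset.sum_neg_distrib]
            linarith
          · obtain ⟨x, hx⟩ := hd0ne
            exact ⟨x, by simpa using hx⟩
      -- d has sum zero, hence has a negative entry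
      have hdsum : (∑ x, d x) = 0 := by
        have := hdF 0
        simpa [hF0] using this
      have hneg : ∃ x, d x < 0 := by
        by_contra hno
        push_neg at hno
        obtain ⟨x, hx⟩ := hdne
        have : ∀ y ∈ Finset.univ, d y = 0 :=
          (Finset.sum_eq_zero_iff_of_nonneg (fun y _ => hno y)).mp hdsum
        exact hx (this x (Finset.mem_univ x))
      -- the step size
      set s' : Finset X := Finset.univ.filter (fun x => d x < 0) with hs'
      have hs'ne : s'.Nonempty := by
        obtain ⟨x, hx⟩ := hneg
        exact ⟨x, Finset.mem_filter.mpr ⟨Finset.mem_univ x, hx⟩⟩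
      obtain ⟨x₀, hx₀mem, hx₀min⟩ :=
        Finset.exists_min_image s' (fun x => q x / (-d x)) hs'ne
      have hdx₀ : d x₀ < 0 := (Finset.mem_filter.mp hx₀mem).2
      have hx₀s : x₀ ∈ s := by
        by_contra hx
        rw [hds x₀ hx] at hdx₀
        exact lt_irrefl 0 hdx₀
      set t : ℝ := q x₀ / (-d x₀) with ht
      have ht0 : 0 ≤ t := div_nonneg (hq x₀) (by linarith)
      set q' : X → ℝ := fun x => q x + t * d x with hq'
      have hq'x₀ : q' x₀ = 0 := by
        have hdne0 : d x₀ ≠ 0 := ne_of_lt hdx₀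
        have htd : t * d x₀ = -q x₀ := by
          rw [ht]; field_simp
        simp only [hq']
        linarith
      have hq'nonneg : ∀ x, 0 ≤ q' x := by
        intro x
        rcases le_or_gt 0 (d x) with hd | hd
        · have := mul_nonneg ht0 hd
          simp only [hq']; linarith [hq x]
        · have hxmem : x ∈ s' := Finset.mem_filter.mpr ⟨Finset.mem_univ x, hd⟩
          have hmin := hx₀min x hxmem
          have hdx : 0 < -d x := by linarith
          have : t * (-d x) ≤ q x := by
            rw [← le_div_iff₀ hdx]
            exact le_trans hmin (le_refl _)
          simp only [hq']; nlinarith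
      have hq'supp : ∀ x, q' x ≠ 0 → x ∈ s.erase x₀ := by
        intro x hx
        rcases eq_or_ne x x₀ with rfl | hne
        · exact absurd hq'x₀ hx
        refine Finset.mem_erase.mpr ⟨hne, ?_⟩
        by_contra hxs
        have h1 : q x = 0 := hqs x hxs
        have h2 : d x = 0 := hds x hxs
        apply hx
        simp [hq', h1, h2]
      have hq'card : (Finset.univ.filter (fun x => q' x ≠ 0)).card ≤ n := by
        have hsub : Finset.univ.filter (fun x => q' x ≠ 0) ⊆ s.erase x₀ := by
          intro x hx
          exact hq'supp x (Finset.mem_filter.mp hx).2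
        have := Finset.card_le_card hsub
        rw [Finset.card_erase_of_mem hx₀s] at this
        omega
      have hsum : ∀ g : X → ℝ, (∑ x, q' x * g x) = (∑ x, q x * g x) + t * ∑ x, d x * g x := by
        intro g
        rw [Finset.mul_sum, ← Finset.sum_add_distrib]
        apply Finset.sum_congr rfl
        intro x _
        simp only [hq']; ring
      obtain ⟨q'', h1, h2, h3, h4⟩ := ih q' hq'nonneg hq'card
      refine ⟨q'', h1, h2, fun i => ?_, ?_⟩
      · rw [h3 i, hsum (F i), hdF i, mul_zero, add_zero]
      · calc (∑ x, q'' x * f x) ≤ ∑ x, q' x * f x := h4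
          _ = (∑ x, q x * f x) + t * ∑ x, d x * f x := hsum f
          _ ≤ ∑ x, q x * f x := by nlinarith [mul_nonneg ht0 (neg_nonneg.mpr hdf)]

theorem stmt3 (X : Type) [Fintype X] (p u w : X → ℝ)
    (hp : ∀ x, 0 ≤ p x) (hp1 : ∑ x, p x = 1)
    (hu : ∀ x, u x ∈ Set.Ioo (0 : ℝ) 1) (hw : ∀ x, w x ∈ Set.Ioo (0 : ℝ) 1) :
    ∃ q : X → ℝ, (∀ x, 0 ≤ q x) ∧ (∑ x, q x) = 1 ∧
      (∃ s : Finset X, s.card ≤ 5 ∧ ∀ x, q x ≠ 0 → x ∈ s) ∧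
      (∑ x, q x * u x) = (∑ x, p x * u x) ∧
      (∑ x, q x * w x) = (∑ x, p x * w x) ∧
      (∑ x, q x * H2 (u x)) = (∑ x, p x * H2 (u x)) ∧
      (∑ x, q x * H2 (w x)) = (∑ x, p x * H2 (w x)) ∧
      (∑ x, q x * ((u x - w x) * (J (w x) - J (u x)))) ≤
        ∑ x, p x * ((u x - w x) * (J (w x) - J (u x))) := by
  set F : Fin 5 → X → ℝ := ![fun _ => 1, u, w, fun x => H2 (u x), fun x => H2 (w x)] with hF
  have hF0 : ∀ x, F 0 x = 1 := fun x => rfl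
  obtain ⟨q, hq, hcard, hconstr, hobj⟩ :=
    reduce_support X F hF0 (fun x => (u x - w x) * (J (w x) - J (u x)))
      (Fintype.card X) p hp (le_trans (Finset.card_le_card (Finset.subset_univ _))
        (le_of_eq (Finset.card_univ)))
  have h0 := hconstr 0
  have h1 := hconstr 1
  have h2 := hconstr 2
  have h3 := hconstr 3
  have h4 := hconstr 4
  simp only [hF, Matrix.cons_val_zero, Matrix.cons_val_one, Matrix.head_cons, mul_one,
    Fin.isValue, Matrix.cons_val_two, Matrix.tail_cons, Matrix.cons_val_three,
    Matrix.cons_val_four, Matrix.head_fin_const] at h0 h1 h2 h3 h4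
  refine ⟨q, hq, ?_, ⟨Finset.univ.filter (fun x => q x ≠ 0), hcard,
    fun x hx => Finset.mem_filter.mpr ⟨Finset.mem_univ x, hx⟩⟩, h1, h2, h3, h4, hobj⟩
  rw [h0, hp1]
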